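/- Sequential Deferred Acceptance (running home-proposing DA independently each period on the current market) is justified envy-free, individually rational, and strictly non-wasteful at every period and action profile, but it is neither patience-free nor strategy-proof. -/

import Mathlib

/-- A one-to-one (partial) matching between children and homes. -/
structure Matching (C H : Type) where
  toHome : C → Option H
  toChild : H → Option C
  consistent : ∀ c h, toHome c = some h ↔ toChild h = some c

/-- A dynamic matching market: cardinal utilities, arrival times, waiting costs. -/
structure Market (C H : Type) where
  U : C → H → ℝ
  V : H → C → ℝ
  arrC : C → ℕ
  arrH : H → ℕ
  wC : ℝ
  wH : ℝ

/-- Accept/reject action profiles of homes over time. -/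
abbrev Actions (H : Type) := H → ℕ → Bool

/-- A dynamic mechanism: given the homes' action profile, a matching in each period. -/
abbrev Mechanism (C H : Type) := Actions H → ℕ → Matching C H

open scoped Classical in
/-- The counterfactual profile in which home `h` rejects every placement before `t'`,
accepts at `t'`, and otherwise plays as in `a`; all other homes play as in `a`. -/
noncomputable def cfProfile {H : Type} (a : Actions H) (h : H) (t' : ℕ) : Actions H :=
  fun h' k =>
    if h' = h then (if k < t' then false else if k = t' then true else a h' k)
    else a h' k

namespace Market

variable {C H : Type}

/-- Time-discounted utility of home `h` for child `c` at time `t`: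
`V_h^t(c) = V_h(c) - (t - arrival(h)) * w_H`. -/
noncomputable def Vt (M : Market C H) (h : H) (c : C) (t : ℕ) : ℝ :=
  M.V h c - ((t : ℝ) - (M.arrH h : ℝ)) * M.wH

/-- Child `c` is active (present in the market) at time `t`:
she has arrived and no home has yet accepted a placement with her. -/
def activeC (M : Market C H) (Q : Mechanism C H) (a : Actions H) (c : C) (t : ℕ) : Prop :=
  M.arrC c ≤ t ∧ ¬ ∃ k < t, ∃ h, (Q a k).toHome c = some h ∧ a h k = true

/-- Home `h` is active (present in the market) at time `t`:
it has arrived and has not yet accepted a placement. -/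
def activeH (M : Market C H) (Q : Mechanism C H) (a : Actions H) (h : H) (t : ℕ) : Prop :=
  M.arrH h ≤ t ∧ ¬ ∃ k < t, (Q a k).toChild h ≠ none ∧ a h k = true

/-- Admissibility: the mechanism only matches agents active in the current market. -/
def feasible (M : Market C H) (Q : Mechanism C H) : Prop :=
  ∀ a t c h, (Q a t).toHome c = some h → M.activeC Q a c t ∧ M.activeH Q a h t

/-- Child `c` has been adopted (placement accepted) by time `t`. -/
def childAdopted (M : Market C H) (Q : Mechanism C H) (a : Actions H) (c : C) (t : ℕ) : Prop :=
  ∃ k ≤ t, ∃ h, (Q a k).toHome c = some h ∧ a h k = true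

/-- Home `h` has accepted a placement by time `t`. -/
def homeAccepted (M : Market C H) (Q : Mechanism C H) (a : Actions H) (h : H) (t : ℕ) : Prop :=
  ∃ k ≤ t, (Q a k).toChild h ≠ none ∧ a h k = true

/-- Justified envy-freeness at every period and action profile: no mutually matched
child and home both strictly prefer each other to their assigned partners. -/
def justifiedEnvyFree (M : Market C H) (Q : Mechanism C H) : Prop :=
  ∀ a t c h h' c', (Q a t).toHome c = some h' → (Q a t).toChild h = some c' →
    ¬ (M.U c h' < M.U c h ∧ M.V h c' < M.V h c)

/-- Individual rationality at every period and action profile. -/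
def individuallyRational (M : Market C H) (Q : Mechanism C H) : Prop :=
  ∀ a t c h, (Q a t).toHome c = some h → 0 ≤ M.U c h ∧ 0 ≤ M.V h c

/-- Patience-freeness: any placement offered at `t` is weakly better (time-discounted)
than the placement the home would receive at any later `t'` in the counterfactual in
which it rejects all placements before `t'` and accepts at `t'`. -/
noncomputable def patienceFree (M : Market C H) (Q : Mechanism C H) : Prop :=
  ∀ (a : Actions H) (t : ℕ) (h : H) (c : C), (Q a t).toChild h = some c →
    ∀ t' > t, ∀ c', (Q (cfProfile a h t') t').toChild h = some c' →
      M.Vt h c' t' ≤ M.Vt h c t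

/-- Dynamic envy-freeness: justified envy-free, patience-free, individually rational. -/
noncomputable def dynamicEnvyFree (M : Market C H) (Q : Mechanism C H) : Prop :=
  M.justifiedEnvyFree Q ∧ M.patienceFree Q ∧ M.individuallyRational Q

/-- Strict non-wastefulness: after every history and action profile there is never an
active unmatched child and an active unmatched home that find each other acceptable. -/
def strictlyNonWasteful (M : Market C H) (Q : Mechanism C H) : Prop :=
  ∀ a t, ¬ ∃ c h, M.activeC Q a c t ∧ M.activeH Q a h t ∧
    0 ≤ M.U c h ∧ 0 ≤ M.V h c ∧ (Q a t).toHome c = none ∧ (Q a t).toChild h = none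

/-- Weak non-wastefulness: when every home accepts every offered placement,
no mutually acceptable unmatched pair ever remains. -/
def weaklyNonWasteful (M : Market C H) (Q : Mechanism C H) : Prop :=
  ∀ t, ¬ ∃ c h, M.activeC Q (fun _ _ => true) c t ∧ M.activeH Q (fun _ _ => true) h t ∧
    0 ≤ M.U c h ∧ 0 ≤ M.V h c ∧
    (Q (fun _ _ => true) t).toHome c = none ∧ (Q (fun _ _ => true) t).toChild h = none

/-- The mechanism is a deterministic function of the history of markets (active sets)
and past matchings. -/
def historyDetermined (M : Market C H) (Q : Mechanism C H) : Prop :=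
  ∀ a a' t,
    (∀ k ≤ t, ∀ c, M.activeC Q a c k ↔ M.activeC Q a' c k) →
    (∀ k ≤ t, ∀ h, M.activeH Q a h k ↔ M.activeH Q a' h k) →
    (∀ k < t, Q a k = Q a' k) →
    Q a t = Q a' t

/-- `x` is the realized (true-utility, time-discounted) payoff of home `h`:
the time-discounted utility of an accepted placement, or `0` if `h` never accepts. -/
noncomputable def payoffIs (M : Market C H) (Q : Mechanism C H) (a : Actions H)
    (h : H) (x : ℝ) : Prop :=
  (∃ t c, (Q a t).toChild h = some c ∧ a h t = true ∧ x = M.Vt h c t) ∨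
  ((∀ t c, (Q a t).toChild h = some c → a h t = false) ∧ x = 0)

end Market

namespace Market

variable {C H : Type}

/-- Stability (feasibility, individual rationality and no blocking pair) of a matching
on given sets of active children and homes. -/
def IsStableOn (M : Market C H) (aC : Set C) (aH : Set H) (μ : Matching C H) : Prop :=
  (∀ c h, μ.toHome c = some h → c ∈ aC ∧ h ∈ aH ∧ 0 ≤ M.U c h ∧ 0 ≤ M.V h c) ∧
  (∀ c h, c ∈ aC → h ∈ aH → 0 ≤ M.U c h → 0 ≤ M.V h c →
    ¬ ((∀ h', μ.toHome c = some h' → M.U c h' < M.U c h) ∧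
       (∀ c', μ.toChild h = some c' → M.V h c' < M.V h c)))

end Market

/-- A mechanism that also takes homes' acceptability reports as input. -/
abbrev ReportMechanism (C H : Type) := (H → C → Bool) → Mechanism C H

namespace Market

variable {C H : Type}

/-- The market with the matchmaker's constructed (reported) home preferences:
the true utility if the home reports the child acceptable, `-1` otherwise. -/
noncomputable def reported (M : Market C H) (σ : H → C → Bool) : Market C H :=
  { M with V := fun h c => if σ h c then M.V h c else -1 }

/-- Strategy-proofness: truthful acceptability reporting together with accepting every
offered placement weakly dominates every alternative (report, action-profile) pair of a
home, in realized true time-discounted payoff. -/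
noncomputable def strategyProofR (M : Market C H) (Q : ReportMechanism C H) : Prop :=
  ∀ (h : H) (σ σ' : H → C → Bool) (a a' : Actions H),
    (∀ c, σ h c = true ↔ 0 ≤ M.V h c) →
    (∀ k, a h k = true) →
    (∀ h', h' ≠ h → σ' h' = σ h') →
    (∀ h', h' ≠ h → a' h' = a h') →
    ∀ x y, M.payoffIs (Q σ) a h x → M.payoffIs (Q σ') a' h y → y ≤ x

end Market

namespace Market

variable {C H : Type}

/-- Characterization of Sequential Deferred Acceptance: each period it outputs the
home-optimal stable matching on the current active sets (independently of history). -/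
structure IsSeqDA (M : Market C H) (Q : Mechanism C H) : Prop where
  stable : ∀ a t, M.IsStableOn {c | M.activeC Q a c t} {h | M.activeH Q a h t} (Q a t)
  homeOpt : ∀ a t μ',
    M.IsStableOn {c | M.activeC Q a c t} {h | M.activeH Q a h t} μ' →
    ∀ h c', μ'.toChild h = some c' →
      ∃ c, (Q a t).toChild h = some c ∧ M.V h c' ≤ M.V h c

end Market

section Aux

open scoped Classical

/-- Empty matching. -/
def mEmpty : Matching Bool Unit :=
  ⟨fun _ => none, fun _ => none, by intro c h; simp⟩

/-- Matching pairing the unique home with child `c0`. -/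
def mOne (c0 : Bool) : Matching Bool Unit :=
  ⟨fun c => if c = c0 then some () else none, fun _ => some c0, by
    intro c h
    by_cases hc : c = c0
    · simp [hc]
    · simp [hc, Ne.symm hc]⟩

/-- The child matched (while the home is active) at time `t`, given acceptability
reports `bf` (for child `false`) and `bt` (for child `true`). -/
def mval (bf bt : Bool) (t : ℕ) : Option Bool :=
  if t = 0 then (if bf then some false else none)
  else (if bt then some true else if bf then some false else none)

/-- The home has accepted before time `t`. -/
def Dn (bf bt : Bool) (a : Actions Unit) (t : ℕ) : Prop :=
  ∃ k < t, mval bf bt k ≠ none ∧ a () k = true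

/-- The sequential DA mechanism for the one-home market. -/
noncomputable def Qgen (bf bt : Bool) : Mechanism Bool Unit := fun a t =>
  if Dn bf bt a t then mEmpty
  else match mval bf bt t with
    | none => mEmpty
    | some c0 => mOne c0

/-- The one-home market: child `false` arrives at 0 with value 0, child `true`
arrives at 1 with value 2; reported values. -/
noncomputable def Mgen (bf bt : Bool) : Market Bool Unit where
  U := fun _ _ => 0
  V := fun _ c => if (cond c bt bf) then (cond c 2 0 : ℝ) else -1
  arrC := fun c => cond c 1 0
  arrH := fun _ => 0
  wC := 0
  wH := 1

lemma Qgen_pos {bf bt : Bool} {a : Actions Unit} {t : ℕ} (h : Dn bf bt a t) :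
    Qgen bf bt a t = mEmpty := if_pos h

lemma Qgen_neg {bf bt : Bool} {a : Actions Unit} {t : ℕ} (h : ¬ Dn bf bt a t) :
    Qgen bf bt a t = (match mval bf bt t with
      | none => mEmpty
      | some c0 => mOne c0) := if_neg h

lemma exists_accept {bf bt : Bool} {a : Actions Unit} :
    ∀ k, mval bf bt k ≠ none → a () k = true →
      ∃ j ≤ k, (Qgen bf bt a j).toChild () ≠ none ∧ a () j = true := by
  intro k
  induction k using Nat.strong_induction_on with
  | _ k ih =>
    intro hm ha
    by_cases hD : Dn bf bt a k
    · obtain ⟨k', hk', hm', ha'⟩ := hD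
      obtain ⟨j, hj, hQ, haj⟩ := ih k' hk' hm' ha'
      exact ⟨j, le_of_lt (lt_of_le_of_lt hj hk'), hQ, haj⟩
    · refine ⟨k, le_rfl, ?_, ha⟩
      rw [Qgen_neg hD]
      rcases hmv : mval bf bt k with _ | c0
      · exact absurd hmv hm
      · simp [hmv, mOne]

lemma activeH_iff {bf bt : Bool} {a : Actions Unit} {t : ℕ} :
    (Mgen bf bt).activeH (Qgen bf bt) a () t ↔ ¬ Dn bf bt a t := by
  unfold Market.activeH
  constructor
  · rintro ⟨-, hne⟩ ⟨k, hk, hm, ha⟩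
    obtain ⟨j, hj, hQ, haj⟩ := exists_accept k hm ha
    exact hne ⟨j, lt_of_le_of_lt hj hk, hQ, haj⟩
  · intro hD
    refine ⟨by simp [Mgen], ?_⟩
    rintro ⟨k, hk, hQ, ha⟩
    by_cases hDk : Dn bf bt a k
    · rw [Qgen_pos hDk] at hQ; exact hQ rfl
    · rw [Qgen_neg hDk] at hQ
      rcases hmv : mval bf bt k with _ | c0
      · rw [hmv] at hQ; exact hQ rfl
      · exact hD ⟨k, hk, by rw [hmv]; simp, ha⟩

lemma activeC_of {bf bt : Bool} {a : Actions Unit} {t : ℕ} {c : Bool}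
    (hD : ¬ Dn bf bt a t) (harr : (Mgen bf bt).arrC c ≤ t) :
    (Mgen bf bt).activeC (Qgen bf bt) a c t := by
  refine ⟨harr, ?_⟩
  rintro ⟨k, hk, h, hQ, ha⟩
  by_cases hDk : Dn bf bt a k
  · rw [Qgen_pos hDk] at hQ; simp [mEmpty] at hQ
  · rw [Qgen_neg hDk] at hQ
    rcases hmv : mval bf bt k with _ | c0
    · rw [hmv] at hQ; simp [mEmpty] at hQ
    · exact hD ⟨k, hk, by rw [hmv]; simp, ha⟩

lemma activeC_true_arr {bf bt : Bool} {a : Actions Unit} {t : ℕ}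
    (h : (Mgen bf bt).activeC (Qgen bf bt) a true t) : 1 ≤ t := h.1

lemma Vle2 (bf bt : Bool) (c : Bool) : (Mgen bf bt).V () c ≤ 2 := by
  cases c <;> simp [Mgen] <;> split <;> norm_num

lemma Vle_top (bf : Bool) (c : Bool) :
    (Mgen bf true).V () c ≤ (Mgen bf true).V () true := by
  cases c <;> simp [Mgen] <;> split <;> norm_num

lemma isSeqDA_gen (bf bt : Bool) : (Mgen bf bt).IsSeqDA (Qgen bf bt) := by
  constructor
  · intro a t
    by_cases hD : Dn bf bt a t
    · rw [Qgen_pos hD]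
      constructor
      · intro c h hc; simp [mEmpty] at hc
      · intro c h hc hh _ _ _
        exact absurd hD (activeH_iff.mp hh)
    · rw [Qgen_neg hD]
      rcases hmv : mval bf bt t with _ | c0
      · -- nobody acceptable is matched: the empty matching
        constructor
        · intro c h hc; simp [mEmpty] at hc
        · rintro c h hc - - hV ⟨-, -⟩
          unfold mval at hmv
          by_cases ht : t = 0
          · subst ht
            have hc0 : c = false := by
              rcases c with _ | _
              · rfl
              · exact absurd (activeC_true_arr hc) (by norm_num)
            subst hc0
            simp only [if_pos rfl] at hmv
            rcases bf with _ | _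
            · simp [Mgen] at hV; linarith
            · simp at hmv
          · simp only [if_neg ht] at hmv
            rcases bt with _ | _ <;> rcases bf with _ | _ <;> simp at hmv <;>
              · rcases c with _ | _ <;> simp [Mgen] at hV <;> linarith
      · have hne : mval bf bt t ≠ none := by rw [hmv]; simp
        -- facts about c0
        have hkey : (t = 0 ∧ c0 = false ∧ bf = true) ∨
            (t ≠ 0 ∧ ((c0 = true ∧ bt = true) ∨ (c0 = false ∧ bt = false ∧ bf = true))) := by
          unfold mval at hmv
          by_cases ht : t = 0
          · simp only [if_pos ht] at hmv
            rcases bf with _ | _ <;> simp at hmv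
            exact Or.inl ⟨ht, hmv, rfl⟩
          · simp only [if_neg ht] at hmv
            rcases bt with _ | _ <;> rcases bf with _ | _ <;> simp at hmv <;>
              exact Or.inr ⟨ht, by simp [hmv.symm]⟩
        have hVc0 : 0 ≤ (Mgen bf bt).V () c0 := by
          rcases hkey with ⟨-, hc0, hbf⟩ | ⟨-, ⟨hc0, hbt⟩ | ⟨hc0, -, hbf⟩⟩ <;>
            subst hc0 <;> simp [Mgen, *] <;> norm_num
        have harr : (Mgen bf bt).arrC c0 ≤ t := by
          rcases hkey with ⟨ht, hc0, -⟩ | ⟨ht, h'⟩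
          · subst hc0; simp [Mgen]
          · rcases h' with ⟨hc0, -⟩ | ⟨hc0, -, -⟩ <;> subst hc0 <;> simp [Mgen] <;>
              omega
        constructor
        · intro c h hc
          have hcc : c = c0 := by
            by_contra hne'
            simp [mOne, hne'] at hc
          subst hcc
          exact ⟨activeC_of hD harr, activeH_iff.mpr hD, le_refl _, hVc0⟩
        · rintro c h hc - - hV ⟨hA, hB⟩
          by_cases hcc : c = c0
          · subst hcc
            have := hA () (by simp [mOne])
            simp [Mgen] at this
          · have hBv := hB c0 (by simp [mOne])
            rcases hkey with ⟨ht, hc0, hbf⟩ | ⟨ht, ⟨hc0, hbt⟩ | ⟨hc0, hbt, hbf⟩⟩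
            · -- t = 0, only child false present
              subst ht; subst hc0
              have : c = true := by rcases c with _ | _ <;> simp_all
              subst this
              exact absurd (activeC_true_arr hc) (by norm_num)
            · -- c0 = true has the top value 2
              subst hc0
              have h2 : (2 : ℝ) < (Mgen bf bt).V () c := by
                simpa [Mgen, hbt] using hBv
              exact absurd h2 (not_lt.mpr (Vle2 bf bt c))
            · -- c0 = false, true unacceptable
              subst hc0
              have : c = true := by rcases c with _ | _ <;> simp_all
              subst this
              simp [Mgen, hbt] at hV
              linarith
  · intro a t μ' hμ h c' hc'
    have hc'' := (μ'.consistent c' h).mpr hc'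
    have hfacts := hμ.1 c' h hc''
    cases h
    have hD : ¬ Dn bf bt a t := activeH_iff.mp hfacts.2.1
    rw [Qgen_neg hD]
    rcases hmv : mval bf bt t with _ | c0
    · -- empty; but then c' is acceptable & active: contradiction with mval = none
      exfalso
      have hV := hfacts.2.2.2
      have harr := hfacts.1.1
      unfold mval at hmv
      by_cases ht : t = 0
      · subst ht
        have hc0 : c' = false := by
          rcases c' with _ | _
          · rfl
          · exact absurd harr (by simp [Mgen])
        subst hc0
        simp only [if_pos rfl] at hmv
        rcases bf with _ | _
        · simp [Mgen] at hV; linarith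
        · simp at hmv
      · simp only [if_neg ht] at hmv
        rcases bt with _ | _ <;> rcases bf with _ | _ <;> simp at hmv <;>
          · rcases c' with _ | _ <;> simp [Mgen] at hV <;> linarith
    · refine ⟨c0, by simp [mOne], ?_⟩
      unfold mval at hmv
      by_cases ht : t = 0
      · subst ht
        simp only [if_pos rfl] at hmv
        rcases bf with _ | _ <;> simp at hmv
        have hc0 : c' = false := by
          rcases c' with _ | _
          · rfl
          · exact absurd hfacts.1.1 (by simp [Mgen])
        subst hc0; rw [← hmv]
      · simp only [if_neg ht] at hmv
        rcases bt with _ | _ <;> rcases bf with _ | _ <;> simp at hmv <;> subst hmv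
        · -- c0 = false (bt = false, bf = true): c' must be false
          have hV := hfacts.2.2.2
          rcases c' with _ | _
          · exact le_refl _
          · simp [Mgen] at hV; linarith
        · exact Vle_top false c'
        · exact Vle_top true c'

end Aux

/-- Proposition 2: Sequential Deferred Acceptance is justified envy-free, individually
rational, and strictly non-wasteful at every period and action profile, but it is
neither patience-free nor strategy-proof. -/
theorem seqDA_props :
    (∀ (C H : Type) (M : Market C H) (Q : Mechanism C H), M.IsSeqDA Q →
      M.justifiedEnvyFree Q ∧ M.individuallyRational Q ∧ M.strictlyNonWasteful Q) ∧
    (∃ (C H : Type) (M : Market C H) (Q : Mechanism C H),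
      M.IsSeqDA Q ∧ ¬ M.patienceFree Q) ∧
    (∃ (C H : Type) (M : Market C H) (Q : ReportMechanism C H),
      (∀ σ, (M.reported σ).IsSeqDA (Q σ)) ∧ ¬ M.strategyProofR Q) := by
  refine ⟨?_, ?_, ?_⟩
  · -- Part 1: JEF, IR, strict non-wastefulness from stability
    intro C H M Q hQ
    obtain ⟨hst, hopt⟩ := hQ
    refine ⟨?_, ?_, ?_⟩
    · intro a t c h h' c' hch hhc hcon
      obtain ⟨hU, hV⟩ := hcon
      have hc := (hst a t).1 c h' hch
      have hc' := (hst a t).1 c' h (((Q a t).consistent c' h).mpr hhc)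
      refine (hst a t).2 c h hc.1 hc'.2.1 (le_of_lt (lt_of_le_of_lt hc.2.2.1 hU))
        (le_of_lt (lt_of_le_of_lt hc'.2.2.2 hV)) ⟨?_, ?_⟩
      · intro h'' hh''
        rw [hch] at hh''
        injection hh'' with hh''
        rw [← hh'']; exact hU
      · intro c'' hc''
        rw [hhc] at hc''
        injection hc'' with hc''
        rw [← hc'']; exact hV
    · intro a t c h hch
      have hc := (hst a t).1 c h hch
      exact ⟨hc.2.2.1, hc.2.2.2⟩
    · rintro a t ⟨c, h, hac, hah, hU, hV, hcn, hhn⟩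
      refine (hst a t).2 c h hac hah hU hV ⟨?_, ?_⟩
      · intro h' hh'; rw [hcn] at hh'; nomatch hh'
      · intro c' hc'; rw [hhn] at hc'; nomatch hc'
  · -- Part 2: not patience-free
    refine ⟨Bool, Unit, Mgen true true, Qgen true true, isSeqDA_gen true true, ?_⟩
    intro hpf
    have hD0 : ¬ Dn true true (fun _ _ => false) 0 := by
      rintro ⟨k, hk, -⟩; exact Nat.not_lt_zero k hk
    have h1 : (Qgen true true (fun _ _ => false) 0).toChild () = some false := by
      rw [Qgen_neg hD0]; simp [mval, mOne]
    have hD1 : ¬ Dn true true (cfProfile (fun _ _ => false) () 1) 1 := by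
      rintro ⟨k, hk, -, ha⟩
      interval_cases k
      simp [cfProfile] at ha
    have h2 : (Qgen true true (cfProfile (fun _ _ => false) () 1) 1).toChild ()
        = some true := by
      rw [Qgen_neg hD1]; simp [mval, mOne]
    have := hpf (fun _ _ => false) 0 () false h1 1 one_pos true h2
    norm_num [Market.Vt, Mgen] at this
  · -- Part 3: not strategy-proof
    refine ⟨Bool, Unit, Mgen true true,
      fun σ => Qgen (σ () false) (σ () true), ?_, ?_⟩
    · intro σ
      have hM : (Mgen true true).reported σ = Mgen (σ () false) (σ () true) := by
        unfold Market.reported Mgen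
        congr 1
        funext h c
        cases h; cases c <;> simp
      rw [hM]
      exact isSeqDA_gen _ _
    · intro hsp
      set a' : Actions Unit := fun _ k => if k = 0 then false else true with ha'
      have hD0 : ¬ Dn true true (fun _ _ => true) 0 := by
        rintro ⟨k, hk, -⟩; exact Nat.not_lt_zero k hk
      have hx : (Mgen true true).payoffIs (Qgen true true) (fun _ _ => true) ()
          ((Mgen true true).Vt () false 0) := by
        left
        refine ⟨0, false, ?_, rfl, rfl⟩
        rw [Qgen_neg hD0]; simp [mval, mOne]
      have hD1 : ¬ Dn true true a' 1 := by
        rintro ⟨k, hk, -, ha⟩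
        interval_cases k
        simp [ha'] at ha
      have hy : (Mgen true true).payoffIs (Qgen true true) a' ()
          ((Mgen true true).Vt () true 1) := by
        left
        refine ⟨1, true, ?_, by simp [ha'], rfl⟩
        rw [Qgen_neg hD1]; simp [mval, mOne]
      have := hsp () (fun _ _ => true) (fun _ _ => true) (fun _ _ => true) a'
        (by intro c; cases c <;> simp [Mgen] <;> norm_num)
        (fun _ => rfl)
        (fun h' hne => absurd rfl hne)
        (fun h' hne => absurd rfl hne)
        _ _ hx hy
      norm_num [Market.Vt, Mgen] at this
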